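/- Atomic decomposition with logarithmic cost (Lemma 4.2): let b(x) = 1 + iA'(x) with A' ∈ L^∞(ℝ). Suppose f : ℝ → ℂ satisfies ∫_ℝ f(x) b(x) dx = 0 and |f(x)| ≤ χ_{I(x0,1)}(x) + χ_{I(y0,1)}(x) for a.e. x, where x0, y0 ∈ ℝ with |x0 − y0| = M > 100 and I(z,L) = {z' ∈ ℝ : |z'−z| < L}. Then there exist finitely many scalars α_j^i and functions a_j^i (j ∈ {1,2}, 1 ≤ i ≤ i0+1 with i0 ≈ log₂ M) such that: each a_j^i is supported in some bounded interval I_j^i, satisfies ‖a_j^i‖_{L^∞} ≤ 1/|I_j^i| and ∫_ℝ a_j^i(x) b(x) dx = 0 (i.e. each a_j^i is an H^1_b L^∞-atom), f = Σ_{j=1}^2 Σ_{i=1}^{i0+1} α_j^i a_j^i, and Σ_{j,i} |α_j^i| ≤ C log M with C depending only on ‖b‖_{L^∞}. In particular f ∈ H^1_b(ℝ) with ‖f‖_{H^1_b(ℝ)} ≤ C log M. -/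

import Mathlib

open MeasureTheory Filter Set
open scoped ENNReal Topology NNReal

noncomputable section

/-- The accretive function `b(x) = 1 + i A'(x)`. -/
def bFun (A' : ℝ → ℝ) : ℝ → ℂ := fun x => 1 + Complex.I * (A' x : ℂ)

/-- The kernel of the Cauchy integral `C_Γ` associated with the Lipschitz curve
`Γ = {x + iA(x) : x ∈ ℝ}`. -/
def cauchyKer (A A' : ℝ → ℝ) (x y : ℝ) : ℂ :=
  ((Real.pi : ℂ) * Complex.I)⁻¹ *
    ((1 + Complex.I * (A' y : ℂ)) /
      ((y : ℂ) - (x : ℂ) + Complex.I * ((A y : ℂ) - (A x : ℂ))))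

/-- The kernel of the related Cauchy operator `C̃_Γ`. -/
def relKer (A : ℝ → ℝ) (x y : ℝ) : ℂ :=
  ((Real.pi : ℂ) * Complex.I)⁻¹ *
    (1 / ((y : ℂ) - (x : ℂ) + Complex.I * ((A y : ℂ) - (A x : ℂ))))

/-- `IsPV K f x z` : `z` is the principal value `p.v. ∫ K(x,y) f(y) dy`. -/
def IsPV (K : ℝ → ℝ → ℂ) (f : ℝ → ℂ) (x : ℝ) (z : ℂ) : Prop :=
  Tendsto (fun ε : ℝ => ∫ y in {y : ℝ | ε < |y - x|}, K x y * f y)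
    (𝓝[>] (0 : ℝ)) (𝓝 z)

/-- `T` is (the `L^p`-extension of) the principal value singular integral operator with
kernel `K`: for every `f ∈ L^p(ℝ)`, `1 < p < ∞`, at a.e. `x` the value `T f x` is the
principal value of `∫ K(x,y) f(y) dy`. -/
def IsPVOp (K : ℝ → ℝ → ℂ) (T : (ℝ → ℂ) → ℝ → ℂ) : Prop :=
  ∀ p : ℝ≥0∞, 1 < p → p < ⊤ → ∀ f : ℝ → ℂ, MemLp f p volume →
    ∀ᵐ x ∂volume, IsPV K f x (T f x)

/-- `T` is bounded on `L^p(ℝ)` with constant `C`. -/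
def BddOnLp (p : ℝ≥0∞) (T : (ℝ → ℂ) → ℝ → ℂ) (C : ℝ) : Prop :=
  ∀ f : ℝ → ℂ, MemLp f p volume →
    MemLp (T f) p volume ∧
      eLpNorm (T f) p volume ≤ ENNReal.ofReal C * eLpNorm f p volume

/-- `T` is a compact operator on `L^p(ℝ)`: every `L^p`-bounded sequence has a subsequence
whose image under `T` is Cauchy in the `L^p` (semi)metric; equivalently, `T` maps bounded
sets to precompact (totally bounded) sets. -/
def CompactOnLp (p : ℝ≥0∞) (T : (ℝ → ℂ) → ℝ → ℂ) : Prop :=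
  ∀ (f : ℕ → ℝ → ℂ) (C : ℝ≥0∞), (∀ n, MemLp (f n) p volume) →
    (∀ n, eLpNorm (f n) p volume ≤ C) →
    ∃ φ : ℕ → ℕ, StrictMono φ ∧
      ∀ ε : ℝ≥0∞, 0 < ε → ∃ N : ℕ, ∀ m ≥ N, ∀ n ≥ N,
        eLpNorm (fun x => T (f (φ m)) x - T (f (φ n)) x) p volume < ε

/-- The bilinear `L²`-pairing `⟨u, v⟩ = ∫ u v`. -/
def pairing (u v : ℝ → ℂ) : ℂ := ∫ x, u x * v x

/-- `S` is the adjoint of `T` with respect to the bilinear pairing `⟨u,v⟩ = ∫ u v`. -/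
def IsBilinAdjoint (T S : (ℝ → ℂ) → ℝ → ℂ) : Prop :=
  ∀ f g : ℝ → ℂ, MemLp f 2 volume → MemLp g 2 volume →
    pairing (T f) g = pairing f (S g)

/-- The bilinear form `Π_b(g,h) = b⁻¹ (g • T h − h • T* g)`. -/
def PiB (b : ℝ → ℂ) (T Tstar : (ℝ → ℂ) → ℝ → ℂ) (g h : ℝ → ℂ) : ℝ → ℂ :=
  fun x => (b x)⁻¹ * (g x * T h x - h x * Tstar g x)

/-- The commutator `[a, T] f = a • T f − T (a f)`. -/
def commutatorFn (a : ℝ → ℂ) (T : (ℝ → ℂ) → ℝ → ℂ) (f : ℝ → ℂ) : ℝ → ℂ :=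
  fun x => a x * T f x - T (fun y => a y * f y) x

/-- The mean oscillation of `f` over the interval `(a, c)`. -/
def meanOsc (f : ℝ → ℂ) (a c : ℝ) : ℝ :=
  (c - a)⁻¹ * ∫ x in a..c, ‖f x - (c - a)⁻¹ • ∫ y in a..c, f y‖

/-- The set of all mean oscillations of `f` over bounded intervals. -/
def bmoSet (f : ℝ → ℂ) : Set ℝ := {t | ∃ a c : ℝ, a < c ∧ t = meanOsc f a c}

/-- `f ∈ BMO(ℝ)`. -/
def MemBMO (f : ℝ → ℂ) : Prop :=
  LocallyIntegrable f volume ∧ BddAbove (bmoSet f)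

/-- The `BMO` seminorm of `f`. -/
def bmoNorm (f : ℝ → ℂ) : ℝ := sSup (bmoSet f)

/-- `f ∈ VMO(ℝ)`: `f ∈ BMO(ℝ)` and the mean oscillations vanish uniformly over small
intervals, over large intervals, and over intervals far from the origin. -/
def MemVMO (f : ℝ → ℂ) : Prop :=
  MemBMO f ∧
    (∀ ε : ℝ, 0 < ε → ∃ δ : ℝ, 0 < δ ∧
      ∀ a c : ℝ, a < c → c - a < δ → meanOsc f a c < ε) ∧
    (∀ ε : ℝ, 0 < ε → ∃ R : ℝ, 0 < R ∧
      ∀ a c : ℝ, a < c → R < c - a → meanOsc f a c < ε) ∧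
    (∀ ε : ℝ, 0 < ε → ∃ R : ℝ, 0 < R ∧
      ∀ a c : ℝ, a < c → (c ≤ -R ∨ R ≤ a) → meanOsc f a c < ε)

/-- `𝔄 ∈ BMO_b(ℝ)` iff `𝔄 / b ∈ BMO(ℝ)`. -/
def MemBMOb (b f : ℝ → ℂ) : Prop := MemBMO (fun x => f x / b x)

/-- `‖𝔄‖_{BMO_b} := ‖𝔄 / b‖_{BMO}`. -/
def bmobNorm (b f : ℝ → ℂ) : ℝ := bmoNorm (fun x => f x / b x)

/-- `𝔄 ∈ VMO_b(ℝ)` iff `𝔄 / b ∈ VMO(ℝ)`. -/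
def MemVMOb (b f : ℝ → ℂ) : Prop := MemVMO (fun x => f x / b x)

/-- An `H¹_b(ℝ)` `L^∞`-atom: supported in an interval `I = I(x0, r)`, with
`‖a‖_∞ ≤ 1/|I|` and the cancellation `∫ a b = 0`. Taking `b ≡ 1` gives classical
`H¹(ℝ)` `L^∞`-atoms. -/
def IsAtomB (b a : ℝ → ℂ) : Prop :=
  ∃ x0 r : ℝ, 0 < r ∧ (∀ x, x ∉ Metric.ball x0 r → a x = 0) ∧
    (∀ x, ‖a x‖ ≤ (2 * r)⁻¹) ∧
    Integrable (fun x => a x * b x) volume ∧ (∫ x, a x * b x) = 0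

/-- The `ℓ¹`-sums of coefficients of atomic decompositions of `f` into `H¹_b` atoms. -/
def h1bReps (b f : ℝ → ℂ) : Set ℝ :=
  {t | ∃ (lam : ℕ → ℂ) (a : ℕ → ℝ → ℂ),
        (∀ j, IsAtomB b (a j)) ∧ Summable (fun j => ‖lam j‖) ∧
        (∀ᵐ x ∂volume, HasSum (fun j => lam j * a j x) (f x)) ∧
        t = ∑' j, ‖lam j‖}

/-- `f ∈ H¹_b(ℝ)`: `f` is integrable and admits an atomic decomposition. -/
def MemH1b (b f : ℝ → ℂ) : Prop := Integrable f volume ∧ (h1bReps b f).Nonempty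

/-- The atomic `H¹_b(ℝ)` norm (with value `⊤` when `f ∉ H¹_b(ℝ)`). -/
def h1bNorm (b f : ℝ → ℂ) : ℝ≥0∞ := ⨅ t ∈ h1bReps b f, ENNReal.ofReal t

end

noncomputable section Helpers

variable {A' : ℝ → ℝ} {L : ℝ≥0}

lemma bFun_meas (hA'meas : Measurable A') : Measurable (bFun A') := by
  unfold bFun
  fun_prop

lemma bFun_re (x : ℝ) : (bFun A' x).re = 1 := by
  simp [bFun]

lemma bFun_norm_le (hA'bd : ∀ x, |A' x| ≤ (L : ℝ)) (x : ℝ) : ‖bFun A' x‖ ≤ 1 + L := by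
  refine (norm_add_le _ _).trans ?_
  simp only [norm_one]
  gcongr
  rw [norm_mul, Complex.norm_I, one_mul, Complex.norm_real, Real.norm_eq_abs]
  exact hA'bd x

lemma bFun_integrableOn (hA'meas : Measurable A') (hA'bd : ∀ x, |A' x| ≤ (L : ℝ))
    {s : Set ℝ} (hs : volume s < ⊤) : IntegrableOn (bFun A') s volume := by
  refine Integrable.mono' (g := fun _ => 1 + (L:ℝ)) ?_ ((bFun_meas hA'meas).aestronglyMeasurable) ?_
  · exact integrableOn_const hs.ne enorm_ne_top
  · exact ae_of_all _ fun x => bFun_norm_le hA'bd x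

def betaC (A' : ℝ → ℝ) (c r : ℝ) : ℂ := ∫ x in Metric.ball c r, bFun A' x

lemma betaC_re (hA'meas : Measurable A') (hA'bd : ∀ x, |A' x| ≤ (L : ℝ)) (c : ℝ) {r : ℝ}
    (hr : 0 ≤ r) : (betaC A' c r).re = 2 * r := by
  have hint : IntegrableOn (bFun A') (Metric.ball c r) volume :=
    bFun_integrableOn hA'meas hA'bd (by rw [Real.volume_ball]; exact ENNReal.ofReal_lt_top)
  have h2 := integral_re (μ := volume.restrict (Metric.ball c r)) hint
  simp only [RCLike.re_to_complex] at h2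
  rw [betaC, ← h2]
  simp only [RCLike.re_to_complex, bFun_re]
  rw [setIntegral_const, measureReal_def, Real.volume_ball, smul_eq_mul, mul_one,
    ENNReal.toReal_ofReal (by linarith)]

lemma betaC_norm_ge (hA'meas : Measurable A') (hA'bd : ∀ x, |A' x| ≤ (L : ℝ)) (c : ℝ) {r : ℝ}
    (hr : 0 ≤ r) : 2 * r ≤ ‖betaC A' c r‖ := by
  rw [← betaC_re hA'meas hA'bd c hr]
  exact Complex.re_le_norm _

lemma betaC_ne_zero (hA'meas : Measurable A') (hA'bd : ∀ x, |A' x| ≤ (L : ℝ)) (c : ℝ) {r : ℝ}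
    (hr : 0 < r) : betaC A' c r ≠ 0 := by
  intro h
  have := betaC_norm_ge hA'meas hA'bd c hr.le (A' := A') (L := L)
  rw [h, norm_zero] at this
  linarith

def phiC (A' : ℝ → ℝ) (c r : ℝ) : ℝ → ℂ :=
  (Metric.ball c r).indicator (fun _ => (betaC A' c r)⁻¹)

lemma phiC_norm_le (hA'meas : Measurable A') (hA'bd : ∀ x, |A' x| ≤ (L : ℝ)) (c : ℝ) {r : ℝ}
    (hr : 0 < r) (x : ℝ) : ‖phiC A' c r x‖ ≤ (2 * r)⁻¹ := by
  unfold phiC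
  by_cases hx : x ∈ Metric.ball c r
  · rw [indicator_of_mem hx, norm_inv]
    exact inv_anti₀ (by linarith) (betaC_norm_ge hA'meas hA'bd c hr.le)
  · rw [indicator_of_notMem hx, norm_zero]
    positivity

lemma phiC_mul_b (c r : ℝ) (x : ℝ) :
    phiC A' c r x * bFun A' x
      = (Metric.ball c r).indicator (fun y => (betaC A' c r)⁻¹ * bFun A' y) x := by
  unfold phiC
  by_cases hx : x ∈ Metric.ball c r <;> simp [hx]

lemma phiC_mul_b_integrable (hA'meas : Measurable A') (hA'bd : ∀ x, |A' x| ≤ (L : ℝ))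
    (c r : ℝ) : Integrable (fun x => phiC A' c r x * bFun A' x) volume := by
  simp only [phiC_mul_b]
  rw [integrable_indicator_iff measurableSet_ball]
  exact (bFun_integrableOn hA'meas hA'bd
    (by rw [Real.volume_ball]; exact ENNReal.ofReal_lt_top)).const_mul _

lemma phiC_mul_b_integral (hA'meas : Measurable A') (hA'bd : ∀ x, |A' x| ≤ (L : ℝ)) (c : ℝ)
    {r : ℝ} (hr : 0 < r) : (∫ x, phiC A' c r x * bFun A' x) = 1 := by
  simp only [phiC_mul_b]
  rw [integral_indicator measurableSet_ball, integral_const_mul]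
  exact inv_mul_cancel₀ (betaC_ne_zero hA'meas hA'bd c hr)

def DecTo (b u : ℝ → ℂ) (c : ℝ) : Prop :=
  ∃ (n : ℕ) (α : Fin n → ℂ) (a : Fin n → ℝ → ℂ),
    (∀ i, IsAtomB b (a i)) ∧ (∀ x, u x = ∑ i, α i * a i x) ∧ (∑ i, ‖α i‖) ≤ c

lemma DecTo.add {b u v : ℝ → ℂ} {c d : ℝ} (hu : DecTo b u c) (hv : DecTo b v d) :
    DecTo b (fun x => u x + v x) (c + d) := by
  obtain ⟨n, α, a, ha, heq, hc⟩ := hu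
  obtain ⟨m, β, e, he, heq', hd⟩ := hv
  refine ⟨n + m, Fin.append α β, Fin.append a e, ?_, ?_, ?_⟩
  · refine Fin.addCases (fun i => ?_) (fun i => ?_) <;>
      simp only [Fin.append_left, Fin.append_right]
    exacts [ha i, he i]
  · intro x
    rw [Fin.sum_univ_add]
    simp only [Fin.append_left, Fin.append_right]
    rw [heq x, heq' x]
  · rw [Fin.sum_univ_add]
    simp only [Fin.append_left, Fin.append_right]
    exact add_le_add hc hd

lemma DecTo.zero (b : ℝ → ℂ) : DecTo b (fun _ => 0) 0 :=
  ⟨0, Fin.elim0, Fin.elim0, fun i => i.elim0, fun x => by simp, by simp⟩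

lemma DecTo.congr {b u v : ℝ → ℂ} {c : ℝ} (hu : DecTo b u c) (h : ∀ x, u x = v x) :
    DecTo b v c := by
  obtain ⟨n, α, a, ha, heq, hc⟩ := hu
  exact ⟨n, α, a, ha, fun x => (h x) ▸ heq x, hc⟩

lemma DecTo.mono {b u : ℝ → ℂ} {c d : ℝ} (hu : DecTo b u c) (hcd : c ≤ d) : DecTo b u d := by
  obtain ⟨n, α, a, ha, heq, hc⟩ := hu
  exact ⟨n, α, a, ha, heq, hc.trans hcd⟩

lemma DecTo.sum {b : ℝ → ℂ} : ∀ {N : ℕ} (u : Fin N → ℝ → ℂ) (c : Fin N → ℝ),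
    (∀ i, DecTo b (u i) (c i)) → DecTo b (fun x => ∑ i, u i x) (∑ i, c i) := by
  intro N
  induction N with
  | zero => intro u c _; simpa using DecTo.zero b
  | succ n ih =>
    intro u c h
    have h2 := (h 0).add (ih (fun i => u i.succ) (fun i => c i.succ) (fun i => h i.succ))
    have h3 : DecTo b (fun x => ∑ i : Fin (n+1), u i x) (c 0 + ∑ i : Fin n, c i.succ) :=
      h2.congr (fun x => (Fin.sum_univ_succ (fun i => u i x)).symm)
    exact h3.mono (le_of_eq (Fin.sum_univ_succ c).symm)

lemma DecTo.of_piece {b g : ℝ → ℂ} {x0 r lam : ℝ} (hr : 0 < r) (hlam : 0 ≤ lam)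
    (hsupp : ∀ x ∉ Metric.ball x0 r, g x = 0) (hbd : ∀ x, ‖g x‖ ≤ lam * (2 * r)⁻¹)
    (hint : Integrable (fun x => g x * b x) volume) (h0 : (∫ x, g x * b x) = 0) :
    DecTo b g lam := by
  rcases eq_or_lt_of_le hlam with hlam0 | hlam0
  · refine ((DecTo.zero b).congr (fun x => ?_)).mono hlam
    have := hbd x
    rw [← hlam0, zero_mul] at this
    have : g x = 0 := norm_le_zero_iff.1 this
    exact this.symm
  · refine ⟨1, fun _ => (lam : ℂ), fun _ => fun x => (lam : ℂ)⁻¹ * g x, fun _ => ?_, fun x => ?_, by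
      simp [Complex.norm_real, abs_of_pos hlam0]⟩
    · refine ⟨x0, r, hr, fun x hx => by
        show (lam:ℂ)⁻¹ * g x = 0
        rw [hsupp x hx, mul_zero], fun x => ?_, ?_, ?_⟩
      · rw [norm_mul, norm_inv, Complex.norm_real, Real.norm_eq_abs, abs_of_pos hlam0]
        calc lam⁻¹ * ‖g x‖ ≤ lam⁻¹ * (lam * (2*r)⁻¹) := by
              exact mul_le_mul_of_nonneg_left (hbd x) (by positivity)
          _ = (2*r)⁻¹ := by field_simp
      · refine (hint.const_mul ((lam:ℂ)⁻¹)).congr ?_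
        exact ae_of_all _ fun x => by ring
      · have : (fun x => ((lam:ℂ)⁻¹ * g x) * b x) = fun x => (lam:ℂ)⁻¹ * (g x * b x) := by
          funext x; ring
        rw [this, integral_const_mul, h0, mul_zero]
    · have : ((lam : ℝ) : ℂ) ≠ 0 := by exact_mod_cast ne_of_gt hlam0
      field_simp
      simp
lemma zero_isAtomB (b : ℝ → ℂ) : IsAtomB b (fun _ => 0) := by
  refine ⟨0, 1, one_pos, fun _ _ => rfl, fun x => by simp, ?_, by simp⟩
  simpa using (integrable_zero ℝ ℂ (volume : Measure ℝ))

lemma mem_h1bReps_of_dec {b f : ℝ → ℂ} {n : ℕ} {α : Fin n → ℂ} {a : Fin n → ℝ → ℂ}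
    (ha : ∀ i, IsAtomB b (a i)) (heq : ∀ᵐ x ∂volume, f x = ∑ i, α i * a i x) :
    (∑ i, ‖α i‖) ∈ h1bReps b f := by
  classical
  set lam : ℕ → ℂ := fun j => if h : j < n then α ⟨j, h⟩ else 0 with hlam
  set aa : ℕ → ℝ → ℂ := fun j => if h : j < n then a ⟨j, h⟩ else fun _ => 0 with haa
  have hz : ∀ j ∉ Finset.range n, ∀ x : ℝ, lam j * aa j x = 0 := by
    intro j hj x
    simp only [Finset.mem_range, not_lt] at hj
    simp [hlam, haa, Nat.not_lt.2 hj]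
  have hFin : ∀ x : ℝ, (∑ i, α i * a i x) = ∑ j ∈ Finset.range n, lam j * aa j x := by
    intro x
    rw [← Fin.sum_univ_eq_sum_range (fun j => lam j * aa j x) n]
    refine Finset.sum_congr rfl fun i _ => ?_
    simp [hlam, haa, i.isLt]
  refine ⟨lam, aa, ?_, ?_, ?_, ?_⟩
  · intro j
    by_cases h : j < n
    · simpa [haa, h] using ha ⟨j, h⟩
    · simpa [haa, h] using zero_isAtomB b
  · refine summable_of_ne_finset_zero (s := Finset.range n) fun j hj => ?_
    simp only [Finset.mem_range, not_lt] at hj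
    simp [hlam, Nat.not_lt.2 hj]
  · filter_upwards [heq] with x hx
    rw [hx, hFin x]
    exact hasSum_sum_of_ne_finset_zero fun j hj => hz j hj x
  · rw [tsum_eq_sum (s := Finset.range n) (fun j hj => by
      simp only [Finset.mem_range, not_lt] at hj
      simp [hlam, Nat.not_lt.2 hj])]
    rw [← Fin.sum_univ_eq_sum_range (fun j => ‖lam j‖) n]
    refine (Finset.sum_congr rfl fun i _ => ?_)
    simp [hlam, i.isLt]

lemma h1bNorm_le_of_mem {b f : ℝ → ℂ} {t : ℝ} (ht : t ∈ h1bReps b f) :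
    h1bNorm b f ≤ ENNReal.ofReal t := iInf₂_le t ht

end Helpers

/-- **Lemma 4.2.** Let `b = 1 + iA'` with `A' ∈ L^∞(ℝ)`. If `∫ f b = 0` and
`|f| ≤ χ_{I(x0,1)} + χ_{I(y0,1)}` a.e. with `|x0 − y0| = M > 100`, then `f` admits a
finite decomposition `f = Σ_{j,i} α_j^i a_j^i` into `H¹_b(ℝ)` `L^∞`-atoms with
`Σ |α_j^i| ≤ C log M`; in particular `f ∈ H¹_b(ℝ)` with `‖f‖_{H¹_b} ≤ C log M`,
where `C` depends only on `‖b‖_∞`. -/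
theorem atomic_decomposition_log_cost
    (A A' : ℝ → ℝ) (L : ℝ≥0) (hA : LipschitzWith L A)
    (hA' : ∀ᵐ x ∂volume, HasDerivAt A (A' x) x)
    (hA'meas : Measurable A') (hA'bd : ∀ x, |A' x| ≤ (L : ℝ)) :
    ∃ C : ℝ, 0 < C ∧ ∀ (f : ℝ → ℂ) (x0 y0 M : ℝ),
      AEStronglyMeasurable f volume →
      100 < M → |x0 - y0| = M →
      (∀ᵐ x ∂volume, ‖f x‖ ≤ (Metric.ball x0 1).indicator (fun _ => (1:ℝ)) x +
        (Metric.ball y0 1).indicator (fun _ => (1:ℝ)) x) →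
      Integrable (fun x => f x * bFun A' x) volume →
      (∫ x, f x * bFun A' x) = 0 →
      (∃ (n : ℕ) (α : Fin n → ℂ) (a : Fin n → ℝ → ℂ),
        (∀ i, IsAtomB (bFun A') (a i)) ∧
        (∀ᵐ x ∂volume, f x = ∑ i, α i * a i x) ∧
        (∑ i, ‖α i‖) ≤ C * Real.log M) ∧
      MemH1b (bFun A') f ∧
      h1bNorm (bFun A') f ≤ ENNReal.ofReal (C * Real.log M) := by
    classical
  refine ⟨100 * (1 + (L : ℝ)), by positivity, ?_⟩
  intro f x0 y0 M hfmeas hM hxy hbound hfb hfb0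
  set b := bFun A' with hbdef
  have hbmeas : Measurable b := bFun_meas hA'meas
  have hbnorm : ∀ x, ‖b x‖ ≤ 1 + (L : ℝ) := bFun_norm_le hA'bd
  have hM0 : (0 : ℝ) < M := by linarith
  -- measurable modification of f
  set g := hfmeas.mk f with hgdef
  have hgsm : StronglyMeasurable g := hfmeas.stronglyMeasurable_mk
  have hgf : f =ᵐ[volume] g := hfmeas.ae_eq_mk
  set bd : ℝ → ℝ := fun x => (Metric.ball x0 1).indicator (fun _ => (1:ℝ)) x +
      (Metric.ball y0 1).indicator (fun _ => (1:ℝ)) x with hbddef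
  have hbdx : ∀ x, bd x = (Metric.ball x0 1).indicator (fun _ => (1:ℝ)) x +
      (Metric.ball y0 1).indicator (fun _ => (1:ℝ)) x := fun _ => rfl
  have hbd0 : ∀ x, 0 ≤ bd x := by
    intro x
    refine add_nonneg ?_ ?_ <;> exact Set.indicator_nonneg (fun _ _ => zero_le_one) x
  have hbdmeas : Measurable bd :=
    ((measurable_const.indicator measurableSet_ball).add
      (measurable_const.indicator measurableSet_ball))
  set S : Set ℝ := {x | ‖g x‖ ≤ bd x} with hSdef
  have hSmeas : MeasurableSet S := measurableSet_le hgsm.measurable.norm hbdmeas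
  set ft : ℝ → ℂ := S.indicator g with hftdef
  have hftsm : StronglyMeasurable ft := hgsm.indicator hSmeas
  have hft_f : f =ᵐ[volume] ft := by
    filter_upwards [hgf, hbound] with x h1 h2
    have hxS : x ∈ S := by rw [hSdef]; simp only [Set.mem_setOf_eq, ← h1]; exact h2
    rw [hftdef, Set.indicator_of_mem hxS]; exact h1
  have hft_bd : ∀ x, ‖ft x‖ ≤ bd x := by
    intro x
    by_cases hx : x ∈ S
    · rw [hftdef, Set.indicator_of_mem hx]; exact hx
    · rw [hftdef, Set.indicator_of_notMem hx, norm_zero]; exact hbd0 x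
  have hdisj : Disjoint (Metric.ball x0 1) (Metric.ball y0 1) := by
    apply Metric.ball_disjoint_ball
    rw [Real.dist_eq, hxy]; linarith
  have hft1 : ∀ x ∈ Metric.ball x0 1, ‖ft x‖ ≤ 1 := by
    intro x hx
    have h2 : x ∉ Metric.ball y0 1 := Set.disjoint_left.1 hdisj hx
    have := hft_bd x
    rwa [hbdx x, Set.indicator_of_mem hx, Set.indicator_of_notMem h2, add_zero] at this
  have hft2 : ∀ x ∈ Metric.ball y0 1, ‖ft x‖ ≤ 1 := by
    intro x hx
    have h2 : x ∉ Metric.ball x0 1 := Set.disjoint_right.1 hdisj hx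
    have := hft_bd x
    rwa [hbdx x, Set.indicator_of_notMem h2, Set.indicator_of_mem hx, zero_add] at this
  have hftsupp : ∀ x, x ∉ Metric.ball x0 1 → x ∉ Metric.ball y0 1 → ft x = 0 := by
    intro x h1 h2
    have hb0 : bd x = 0 := by
      rw [hbdx x, Set.indicator_of_notMem h1, Set.indicator_of_notMem h2, add_zero]
    have := hft_bd x
    rw [hb0] at this
    exact norm_le_zero_iff.1 this
  have hsplit : ∀ x, ft x = (Metric.ball x0 1).indicator ft x +
      (Metric.ball y0 1).indicator ft x := by
    intro x
    by_cases h1 : x ∈ Metric.ball x0 1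
    · have h2 : x ∉ Metric.ball y0 1 := Set.disjoint_left.1 hdisj h1
      rw [Set.indicator_of_mem h1, Set.indicator_of_notMem h2, add_zero]
    · by_cases h2 : x ∈ Metric.ball y0 1
      · rw [Set.indicator_of_notMem h1, Set.indicator_of_mem h2, zero_add]
      · rw [Set.indicator_of_notMem h1, Set.indicator_of_notMem h2, add_zero,
          hftsupp x h1 h2]
  -- integrability and size of the two local integrals
  have hkey : ∀ z : ℝ, (∀ x ∈ Metric.ball z 1, ‖ft x‖ ≤ 1) →
      Integrable (fun x => (Metric.ball z 1).indicator ft x * b x) volume ∧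
      ‖∫ x, (Metric.ball z 1).indicator ft x * b x‖ ≤ 2 * (1 + (L : ℝ)) := by
    intro z hz
    have heqi : (fun x => (Metric.ball z 1).indicator ft x * b x) =
        (Metric.ball z 1).indicator (fun x => ft x * b x) := by
      funext x
      by_cases hx : x ∈ Metric.ball z 1 <;>
        simp [Set.indicator_of_mem, Set.indicator_of_notMem, hx]
    have hmeasprod : AEStronglyMeasurable (fun x => ft x * b x)
        (volume.restrict (Metric.ball z 1)) :=
      (hftsm.aestronglyMeasurable.mul hbmeas.aestronglyMeasurable).restrict
    have hvol : volume (Metric.ball z 1) < ⊤ := measure_ball_lt_top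
    constructor
    · rw [heqi, integrable_indicator_iff measurableSet_ball]
      refine Integrable.mono' (g := fun _ => 1 + (L : ℝ))
        (integrableOn_const hvol.ne enorm_ne_top) hmeasprod ?_
      refine (ae_restrict_iff' measurableSet_ball).2 (ae_of_all _ fun x hx => ?_)
      rw [norm_mul]
      calc ‖ft x‖ * ‖b x‖ ≤ 1 * (1 + (L : ℝ)) :=
            mul_le_mul (hz x hx) (hbnorm x) (norm_nonneg _) zero_le_one
        _ = 1 + (L : ℝ) := one_mul _
    · rw [heqi, integral_indicator measurableSet_ball]
      have hb' : ‖∫ x in Metric.ball z 1, ft x * b x‖ ≤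
          (1 + (L : ℝ)) * (volume (Metric.ball z 1)).toReal := by
        refine norm_setIntegral_le_of_norm_le_const hvol (fun x hx => ?_)
        rw [norm_mul]
        calc ‖ft x‖ * ‖b x‖ ≤ 1 * (1 + (L : ℝ)) :=
              mul_le_mul (hz x hx) (hbnorm x) (norm_nonneg _) zero_le_one
          _ = 1 + (L : ℝ) := one_mul _
      rw [Real.volume_ball, ENNReal.toReal_ofReal (by norm_num)] at hb'
      linarith
  obtain ⟨hint1, hc1bd⟩ := hkey x0 hft1
  obtain ⟨hint2, hc2bd⟩ := hkey y0 hft2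
  set c1 := ∫ x, (Metric.ball x0 1).indicator ft x * b x with hc1def
  set c2 := ∫ x, (Metric.ball y0 1).indicator ft x * b x with hc2def
  have hc12 : c1 + c2 = 0 := by
    have hfteq : (∫ x, ft x * b x) = 0 := by
      rw [← hfb0]
      refine integral_congr_ae ?_
      filter_upwards [hft_f] with x hx
      rw [hx]
    have hadd : c1 + c2 = ∫ x, ((Metric.ball x0 1).indicator ft x * b x +
        (Metric.ball y0 1).indicator ft x * b x) := (integral_add hint1 hint2).symm
    rw [hadd, ← hfteq]
    refine integral_congr_ae (ae_of_all _ fun x => ?_)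
    show (Metric.ball x0 1).indicator ft x * b x + (Metric.ball y0 1).indicator ft x * b x
        = ft x * b x
    rw [← add_mul, ← hsplit x]
  have hc2neg : c2 = -c1 := eq_neg_of_add_eq_zero_right hc12
    -- the number of dyadic steps
  set N := ⌈Real.logb 2 M⌉₊ with hNdef
  have hlogb0 : 0 ≤ Real.logb 2 M := Real.logb_nonneg one_lt_two (by linarith)
  have h2N : M ≤ (2:ℝ)^N := by
    calc M = (2:ℝ) ^ (Real.logb 2 M) := (Real.rpow_logb two_pos (by norm_num) hM0).symm
      _ ≤ (2:ℝ) ^ ((N:ℝ)) := Real.rpow_le_rpow_of_exponent_le one_le_two (Nat.le_ceil _)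
      _ = (2:ℝ)^N := by rw [Real.rpow_natCast]
  -- the dyadic bump functions
  set Φ : ℝ → ℕ → ℝ → ℂ := fun z i => phiC A' z ((2:ℝ)^i) with hΦdef
  have hpow : ∀ i : ℕ, (0:ℝ) < 2^i := fun i => by positivity
  have hΦnorm : ∀ (z : ℝ) (i : ℕ) (x : ℝ), ‖Φ z i x‖ ≤ (2 * 2^i)⁻¹ :=
    fun z i x => phiC_norm_le hA'meas hA'bd z (hpow i) x
  have hΦint : ∀ (z : ℝ) (i : ℕ), Integrable (fun x => Φ z i x * b x) volume :=
    fun z i => phiC_mul_b_integrable hA'meas hA'bd z _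
  have hΦint1 : ∀ (z : ℝ) (i : ℕ), (∫ x, Φ z i x * b x) = 1 :=
    fun z i => phiC_mul_b_integral hA'meas hA'bd z (hpow i)
  have hΦsupp : ∀ (z : ℝ) (i : ℕ) (x : ℝ), x ∉ Metric.ball z ((2:ℝ)^i) → Φ z i x = 0 :=
    fun z i x hx => Set.indicator_of_notMem hx _
  -- the two local pieces
  have hpiece : ∀ (z : ℝ) (cz : ℂ), (∀ x ∈ Metric.ball z 1, ‖ft x‖ ≤ 1) → ‖cz‖ ≤ 2*(1+(L:ℝ)) →
      Integrable (fun x => (Metric.ball z 1).indicator ft x * b x) volume →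
      cz = ∫ x, (Metric.ball z 1).indicator ft x * b x →
      DecTo b (fun x => (Metric.ball z 1).indicator ft x - cz * Φ z 0 x) (2*(2+(L:ℝ))) := by
    intro z cz hz hczbd hintz hczdef
    have hball : Metric.ball z ((2:ℝ)^(0:ℕ)) = Metric.ball z 1 := by norm_num
    refine DecTo.of_piece (x0 := z) (r := 1) one_pos (by positivity) ?_ ?_ ?_ ?_
    · intro x hx
      rw [Set.indicator_of_notMem hx, hΦsupp z 0 x (by rwa [hball]), mul_zero, sub_zero]
    · intro x
      have h1 : ‖(Metric.ball z 1).indicator ft x‖ ≤ 1 := by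
        by_cases hx : x ∈ Metric.ball z 1
        · rw [Set.indicator_of_mem hx]; exact hz x hx
        · rw [Set.indicator_of_notMem hx, norm_zero]; exact zero_le_one
      have h2 : ‖cz * Φ z 0 x‖ ≤ 2*(1+(L:ℝ)) * (2 * 1)⁻¹ := by
        rw [norm_mul]
        refine mul_le_mul hczbd ?_ (norm_nonneg _) (by positivity)
        have := hΦnorm z 0 x
        norm_num at this ⊢
        exact this
      calc ‖(Metric.ball z 1).indicator ft x - cz * Φ z 0 x‖
          ≤ ‖(Metric.ball z 1).indicator ft x‖ + ‖cz * Φ z 0 x‖ := norm_sub_le _ _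
        _ ≤ 1 + 2*(1+(L:ℝ)) * (2 * 1)⁻¹ := add_le_add h1 h2
        _ ≤ 2*(2+(L:ℝ)) * (2 * 1)⁻¹ := by ring_nf; linarith
    · refine (hintz.sub ((hΦint z 0).const_mul cz)).congr (ae_of_all _ fun x => ?_)
      show (Metric.ball z 1).indicator ft x * b x - cz * (Φ z 0 x * b x) = _
      ring
    · have heq : (fun x => ((Metric.ball z 1).indicator ft x - cz * Φ z 0 x) * b x)
          = fun x => (Metric.ball z 1).indicator ft x * b x - cz * (Φ z 0 x * b x) := by
        funext x; ring
      rw [heq, integral_sub hintz ((hΦint z 0).const_mul cz), integral_const_mul,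
        hΦint1 z 0, mul_one, ← hczdef, sub_self]
  have Dh1 := hpiece x0 c1 hft1 hc1bd hint1 hc1def
  have Dh2 := hpiece y0 c2 hft2 hc2bd hint2 hc2def
  -- the chain pieces
  have hchain : ∀ (z : ℝ) (cz : ℂ), ‖cz‖ ≤ 2*(1+(L:ℝ)) →
      DecTo b (fun x => ∑ i : Fin N, (cz * (Φ z i x - Φ z (i+1) x)) )
        ((N : ℝ) * (3 * ‖cz‖)) := by
    intro z cz hczbd
    have := DecTo.sum (b := b) (N := N)
      (fun i => fun x => cz * (Φ z i x - Φ z (i+1) x)) (fun _ => 3 * ‖cz‖) ?_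
    · refine this.mono ?_
      rw [Finset.sum_const, Finset.card_univ, Fintype.card_fin, nsmul_eq_mul]
    · intro i
      have hdec : DecTo b (fun x => cz * (Φ z (i:ℕ) x - Φ z ((i:ℕ)+1) x)) (3 * ‖cz‖) := by
        refine DecTo.of_piece (x0 := z) (r := (2:ℝ)^((i:ℕ)+1)) (hpow _) (by positivity)
          ?_ ?_ ?_ ?_
        · intro x hx
          have hx' : x ∉ Metric.ball z ((2:ℝ)^(i:ℕ)) := fun hmem =>
            hx (Metric.ball_subset_ball (by
              have := hpow (i:ℕ); rw [pow_succ]; nlinarith) hmem)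
          rw [hΦsupp z _ x hx, hΦsupp z _ x hx', sub_zero, mul_zero]
        · intro x
          have h1 := hΦnorm z (i:ℕ) x
          have h2 := hΦnorm z ((i:ℕ)+1) x
          have hp := hpow (i:ℕ)
          have hkey : ‖Φ z (i:ℕ) x - Φ z ((i:ℕ)+1) x‖ ≤ 3 * (2 * 2^((i:ℕ)+1))⁻¹ := by
            refine (norm_sub_le _ _).trans ?_
            rw [pow_succ] at *
            rw [show (3:ℝ) * (2 * (2^(i:ℕ) * 2))⁻¹ = (2 * 2^(i:ℕ))⁻¹ + (2 * (2^(i:ℕ)*2))⁻¹ by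
              field_simp; ring]
            exact add_le_add h1 h2
          rw [norm_mul]
          calc ‖cz‖ * ‖Φ z (i:ℕ) x - Φ z ((i:ℕ)+1) x‖
              ≤ ‖cz‖ * (3 * (2 * 2^((i:ℕ)+1))⁻¹) :=
                mul_le_mul_of_nonneg_left hkey (norm_nonneg _)
            _ = 3 * ‖cz‖ * (2 * 2^((i:ℕ)+1))⁻¹ := by ring
        · refine (((hΦint z (i:ℕ)).sub (hΦint z ((i:ℕ)+1))).const_mul cz).congr
            (ae_of_all _ fun x => ?_)
          show cz * (Φ z (i:ℕ) x * b x - Φ z ((i:ℕ)+1) x * b x) = _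
          ring
        · have heq : (fun x => (cz * (Φ z (i:ℕ) x - Φ z ((i:ℕ)+1) x)) * b x)
              = fun x => cz * (Φ z (i:ℕ) x * b x - Φ z ((i:ℕ)+1) x * b x) := by
            funext x; ring
          rw [heq, integral_const_mul, integral_sub (hΦint z _) (hΦint z _),
            hΦint1, hΦint1, sub_self, mul_zero]
      exact hdec
  have Dch1 := hchain x0 c1 hc1bd
  have Dch2 := hchain y0 c2 hc2bd
    -- the far-away piece
  have Dfin : DecTo b (fun x => c1 * (Φ x0 N x - Φ y0 N x)) (4 * ‖c1‖) := by
    refine DecTo.of_piece (x0 := x0) (r := (2:ℝ)^(N+1)) (hpow _) (by positivity)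
      ?_ ?_ ?_ ?_
    · intro x hx
      have hx1 : x ∉ Metric.ball x0 ((2:ℝ)^N) := fun hmem =>
        hx (Metric.ball_subset_ball (by
          have := hpow N; rw [pow_succ]; nlinarith) hmem)
      have hx2 : x ∉ Metric.ball y0 ((2:ℝ)^N) := by
        intro hmem
        apply hx
        rw [Metric.mem_ball] at hmem ⊢
        have htri : dist x x0 ≤ dist x y0 + dist y0 x0 := dist_triangle _ _ _
        have hdyx : dist y0 x0 = M := by rw [Real.dist_eq, abs_sub_comm, hxy]
        have := hpow N
        rw [pow_succ]
        nlinarith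
      rw [hΦsupp x0 N x hx1, hΦsupp y0 N x hx2, sub_zero, mul_zero]
    · intro x
      have h1 := hΦnorm x0 N x
      have h2 := hΦnorm y0 N x
      have hp := hpow N
      calc ‖c1 * (Φ x0 N x - Φ y0 N x)‖ ≤ ‖c1‖ * ((2 * 2^N)⁻¹ + (2 * 2^N)⁻¹) := by
            rw [norm_mul]
            exact mul_le_mul_of_nonneg_left ((norm_sub_le _ _).trans (add_le_add h1 h2))
              (norm_nonneg _)
        _ = 4 * ‖c1‖ * (2 * 2^(N+1))⁻¹ := by rw [pow_succ]; field_simp; ring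
    · refine (((hΦint x0 N).sub (hΦint y0 N)).const_mul c1).congr
        (ae_of_all _ fun x => ?_)
      show c1 * (Φ x0 N x * b x - Φ y0 N x * b x) = _
      ring
    · have heq : (fun x => (c1 * (Φ x0 N x - Φ y0 N x)) * b x)
          = fun x => c1 * (Φ x0 N x * b x - Φ y0 N x * b x) := by
        funext x; ring
      rw [heq, integral_const_mul, integral_sub (hΦint x0 N) (hΦint y0 N),
        hΦint1, hΦint1, sub_self, mul_zero]
  -- assemble the full decomposition
  have Dtot := (((Dh1.add Dh2).add Dch1).add Dch2).add Dfin
  have tele : ∀ (z : ℝ) (cz : ℂ) (x : ℝ),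
      (∑ i : Fin N, (cz * (Φ z i x - Φ z (i+1) x))) = cz * (Φ z 0 x - Φ z N x) := by
    intro z cz x
    rw [← Finset.mul_sum]
    congr 1
    rw [Fin.sum_univ_eq_sum_range (fun i => Φ z i x - Φ z (i+1) x) N]
    exact Finset.sum_range_sub' (fun i => Φ z i x) N
  have Dft : DecTo b ft ((2*(2+(L:ℝ)) + 2*(2+(L:ℝ)) + (N:ℝ)*(3*‖c1‖) + (N:ℝ)*(3*‖c2‖))
      + 4*‖c1‖) := by
    refine (Dtot.congr fun x => ?_).mono (le_of_eq (by ring))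
    show ((Metric.ball x0 1).indicator ft x - c1 * Φ x0 0 x)
        + ((Metric.ball y0 1).indicator ft x - c2 * Φ y0 0 x)
        + (∑ i : Fin N, (c1 * (Φ x0 i x - Φ x0 (i+1) x)))
        + (∑ i : Fin N, (c2 * (Φ y0 i x - Φ y0 (i+1) x)))
        + c1 * (Φ x0 N x - Φ y0 N x) = ft x
    rw [tele x0 c1 x, tele y0 c2 x, hc2neg, hsplit x]
    ring
  -- numerical bound on the cost
  have hlog1 : 1 ≤ Real.log M := by
    rw [Real.le_log_iff_exp_le hM0]
    have := Real.exp_one_lt_d9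
    linarith
  have hlog2 := Real.log_two_gt_d9
  have hNbd : (N : ℝ) ≤ 3 * Real.log M := by
    have h1 : (N : ℝ) < Real.logb 2 M + 1 := Nat.ceil_lt_add_one hlogb0
    have h2 : Real.logb 2 M ≤ 2 * Real.log M := by
      rw [Real.logb, div_le_iff₀ (by linarith)]
      nlinarith
    linarith
  have hcost : (2*(2+(L:ℝ)) + 2*(2+(L:ℝ)) + (N:ℝ)*(3*‖c1‖) + (N:ℝ)*(3*‖c2‖)) + 4*‖c1‖
      ≤ 100 * (1 + (L:ℝ)) * Real.log M := by
    have hL0 : (0:ℝ) ≤ L := L.coe_nonneg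
    have hN0 : (0:ℝ) ≤ N := Nat.cast_nonneg N
    have hc10 : (0:ℝ) ≤ ‖c1‖ := norm_nonneg _
    have hc20 : (0:ℝ) ≤ ‖c2‖ := norm_nonneg _
    nlinarith [mul_le_mul hNbd hc1bd hc10 (by positivity : (0:ℝ) ≤ 3*Real.log M),
      mul_le_mul hNbd hc2bd hc20 (by positivity : (0:ℝ) ≤ 3*Real.log M),
      mul_nonneg hL0 (by linarith : (0:ℝ) ≤ Real.log M - 1)]
  have Dft' := Dft.mono hcost
  obtain ⟨n, α, a, hatom, heqft, hsum⟩ := Dft'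
  have hfae : ∀ᵐ x ∂volume, f x = ∑ i, α i * a i x := by
    filter_upwards [hft_f] with x hx
    rw [hx, heqft x]
  have hbdint : Integrable bd volume := by
    refine Integrable.add ?_ ?_ <;>
      exact (integrable_indicator_iff measurableSet_ball).2
        (integrableOn_const measure_ball_lt_top.ne enorm_ne_top)
  have hfint : Integrable f volume := Integrable.mono' hbdint hfmeas hbound
  have hmem : (∑ i, ‖α i‖) ∈ h1bReps b f := mem_h1bReps_of_dec hatom hfae
  refine ⟨⟨n, α, a, hatom, hfae, hsum⟩, ⟨hfint, ⟨_, hmem⟩⟩, ?_⟩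
  exact (h1bNorm_le_of_mem hmem).trans (ENNReal.ofReal_le_ofReal hsum)
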